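/- Let (G,H) be a CSS pair with k = n − rank(G) − rank(H), let H* be an adapted dual of H (stacking G with k extra rows spanning C_H^⊥ together with the rows of G), and let G* be an adapted dual of G (stacking H with k extra rows spanning C_G^⊥ together with the rows of H). Then for every K > 0, with K* > 0 defined by tanh(K*) = e^{−2K}, the homological differences at zero error satisfy the duality relation ΔF_0(G,H;K) = k·ln 2 − ΔF_0(H,G;K*); explicitly, ln Z_0(H*;K) − ln Z_0(G;K) = k·ln 2 − ln Z_0(G*;K*) + ln Z_0(H;K*). -/

import Mathlib

open Matrix Filter

/-- Partition function `Z_e(G;K)` of the random-bond Ising model in Wegner's form. -/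
noncomputable def Zf {ρ : Type*} [Fintype ρ] [DecidableEq ρ] {n : ℕ}
    (G : Matrix ρ (Fin n) (ZMod 2)) (e : Fin n → ZMod 2) (K : ℝ) : ℝ :=
  ∑ α : ρ → ZMod 2,
    Real.exp (K * ∑ b : Fin n, (-1 : ℝ) ^ ((e b).val + ((Matrix.vecMul α G) b).val))

/-- `Hs` is an adapted dual of `H`: it stacks `G` on top of `k` extra rows, and its
row space equals `C_H^⊥ = {c | H cᵀ = 0}`. -/
def IsAdaptedDual {rG rH k n : ℕ} (G : Matrix (Fin rG) (Fin n) (ZMod 2))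
    (H : Matrix (Fin rH) (Fin n) (ZMod 2))
    (Hs : Matrix (Fin rG ⊕ Fin k) (Fin n) (ZMod 2)) : Prop :=
  (∀ i, Hs (Sum.inl i) = G i) ∧
  LinearMap.range Hs.vecMulLinear = LinearMap.ker H.mulVecLin

/-- Homological difference `ΔF_e(G,H;K) = ln Z_e(H*;K) − ln Z_e(G;K)`. -/
noncomputable def deltaF {ρ ρ' : Type*} [Fintype ρ] [DecidableEq ρ] [Fintype ρ'] [DecidableEq ρ'] {n : ℕ}
    (G : Matrix ρ (Fin n) (ZMod 2)) (Hs : Matrix ρ' (Fin n) (ZMod 2))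
    (e : Fin n → ZMod 2) (K : ℝ) : ℝ :=
  Real.log (Zf Hs e K) - Real.log (Zf G e K)

/-- Disorder average `[X_e]_p = Σ_e p^{|e|}(1−p)^{n−|e|} X_e`. -/
noncomputable def davg {n : ℕ} (p : ℝ) (X : (Fin n → ZMod 2) → ℝ) : ℝ :=
  ∑ e : Fin n → ZMod 2, p ^ hammingNorm e * (1 - p) ^ (n - hammingNorm e) * X e

/-- Average success probability of maximum-likelihood decoding. -/
noncomputable def Psucc {ρ ρ' : Type*} [Fintype ρ] [DecidableEq ρ] [Fintype ρ'] [DecidableEq ρ'] {n : ℕ}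
    (G : Matrix ρ (Fin n) (ZMod 2)) (Hs : Matrix ρ' (Fin n) (ZMod 2))
    (K p : ℝ) : ℝ :=
  davg p (fun e => Zf G e K / Zf Hs e K)

/-- CSS distance `d_G`: minimum Hamming weight of a vector `c` with `H cᵀ = 0`
that is not in the row space of `G`. -/
noncomputable def dCSS {rG rH n : ℕ} (G : Matrix (Fin rG) (Fin n) (ZMod 2))
    (H : Matrix (Fin rH) (Fin n) (ZMod 2)) : ℕ :=
  sInf {w | ∃ c : Fin n → ZMod 2,
    H.mulVec c = 0 ∧ (¬ ∃ α, Matrix.vecMul α G = c) ∧ hammingNorm c = w}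

namespace KWAux

open Finset

attribute [local instance] Classical.propDecidable

private lemma zmod2_cases (x : ZMod 2) : x = 0 ∨ x = 1 := by revert x; decide

private lemma chi_add (x y : ZMod 2) : ((-1:ℝ))^((x+y).val) = (-1)^x.val * (-1)^y.val := by
  rcases zmod2_cases x with hx|hx <;> rcases zmod2_cases y with hy|hy <;> subst hx <;> subst hy <;>
    norm_num [show ((0:ZMod 2)+0).val = 0 by decide, show ((0:ZMod 2)+1).val = 1 by decide,
      show ((1:ZMod 2)+0).val = 1 by decide, show ((1:ZMod 2)+1).val = 0 by decide, show ((2:ZMod 2)).val = 0 by decide,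
      show ((0:ZMod 2)).val = 0 by decide, show ((1:ZMod 2)).val = 1 by decide]

private lemma chi_mul (x y : ZMod 2) : ((-1:ℝ))^((x*y).val) = ((-1:ℝ))^(x.val * y.val) := by
  rcases zmod2_cases x with hx|hx <;> rcases zmod2_cases y with hy|hy <;> subst hx <;> subst hy <;>
    norm_num [show ((0:ZMod 2)*0).val = 0 by decide, show ((0:ZMod 2)*1).val = 0 by decide,
      show ((1:ZMod 2)*0).val = 0 by decide, show ((1:ZMod 2)*1).val = 1 by decide,
      show ((0:ZMod 2)).val = 0 by decide, show ((1:ZMod 2)).val = 1 by decide]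

private lemma chi_sum {ι : Type*} (s : Finset ι) (f : ι → ZMod 2) :
    ((-1:ℝ))^((∑ i ∈ s, f i).val) = ∏ i ∈ s, ((-1:ℝ))^((f i).val) := by
  classical
  induction s using Finset.induction_on with
  | empty => simp [show ((0:ZMod 2)).val = 0 by decide]
  | insert _ _ h ih => rw [Finset.sum_insert h, Finset.prod_insert h, chi_add, ih]

private lemma sum_zmod2 (g : ZMod 2 → ℝ) : ∑ t : ZMod 2, g t = g 0 + g 1 := by
  have : (Finset.univ : Finset (ZMod 2)) = {0, 1} := by decide
  rw [this, Finset.sum_insert (by decide), Finset.sum_singleton]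

private lemma hn_eq_sum {n : ℕ} (x : Fin n → ZMod 2) : hammingNorm x = ∑ b, (x b).val := by
  classical
  rw [hammingNorm]
  rw [Finset.card_eq_sum_ones]
  rw [← Finset.sum_filter_of_ne (p := fun b => x b ≠ 0) (f := fun b => (x b).val)
    (by intro b _ hb; intro h0; exact hb (by simp [h0, ZMod.val_zero]))]
  refine Finset.sum_congr rfl fun b hb => ?_
  rcases zmod2_cases (x b) with h|h
  · simp [h] at hb
  · simp [h, show ((1:ZMod 2)).val = 1 by decide]

private lemma char_sum {ρ : Type*} [Fintype ρ] [DecidableEq ρ] (v : ρ → ZMod 2) :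
    ∑ α : ρ → ZMod 2, ((-1:ℝ))^((α ⬝ᵥ v).val) =
      if v = 0 then (2:ℝ)^(Fintype.card ρ) else 0 := by
  have h1 : ∀ α : ρ → ZMod 2, ((-1:ℝ))^((α ⬝ᵥ v).val) = ∏ i, ((-1:ℝ))^((α i).val * (v i).val) := by
    intro α
    rw [dotProduct, chi_sum]
    exact Finset.prod_congr rfl fun i _ => chi_mul _ _
  simp_rw [h1]
  have key := Finset.prod_univ_sum (t := fun _ : ρ => (Finset.univ : Finset (ZMod 2)))
    (f := fun i a => ((-1:ℝ))^(a.val * (v i).val))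
  rw [Fintype.piFinset_univ] at key
  rw [← key]
  have h2 : ∀ i, (∑ a : ZMod 2, ((-1:ℝ))^(a.val * (v i).val)) = if v i = 0 then 2 else 0 := by
    intro i
    rw [sum_zmod2]
    rcases zmod2_cases (v i) with h|h <;>
      · simp [h, show ((0:ZMod 2)).val = 0 by decide, show ((1:ZMod 2)).val = 1 by decide]
        try norm_num
  simp_rw [h2]
  by_cases hv : v = 0
  · subst hv; simp
  · obtain ⟨i, hi⟩ := Function.ne_iff.mp hv
    rw [if_neg hv]
    exact Finset.prod_eq_zero (Finset.mem_univ i) (by simp only [Pi.zero_apply] at hi; simp [hi])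


private lemma exp_expand (K : ℝ) (v : ZMod 2) :
    Real.exp (K * (-1:ℝ)^v.val) =
      Real.cosh K * ∑ t : ZMod 2, Real.tanh K ^ t.val * (-1:ℝ)^(v.val * t.val) := by
  have hc : Real.cosh K ≠ 0 := ne_of_gt (Real.cosh_pos K)
  rw [sum_zmod2]
  rcases zmod2_cases v with h|h <;> subst h <;>
    simp only [show ((0:ZMod 2)).val = 0 by decide, show ((1:ZMod 2)).val = 1 by decide,
      pow_zero, pow_one, Nat.mul_zero, Nat.zero_mul, Nat.mul_one, Nat.one_mul, mul_one,
      mul_neg, mul_zero] <;>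
    rw [Real.tanh_eq_sinh_div_cosh] <;> field_simp
  · rw [Real.cosh_add_sinh]
  rw [← sub_eq_add_neg, Real.cosh_sub_sinh]

private lemma kw {ρ : Type*} [Fintype ρ] [DecidableEq ρ] {n : ℕ}
    (M : Matrix ρ (Fin n) (ZMod 2)) (K : ℝ) :
    Zf M 0 K = (2:ℝ)^(Fintype.card ρ) * Real.cosh K ^ n *
      ∑ τ : Fin n → ZMod 2, (if M.mulVec τ = 0 then Real.tanh K ^ (hammingNorm τ) else 0) := by
  unfold Zf
  have step1 : ∀ α : ρ → ZMod 2,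
      Real.exp (K * ∑ b, ((-1:ℝ)) ^ (((0 : Fin n → ZMod 2) b).val + ((α ᵥ* M) b).val)) =
      Real.cosh K ^ n * ∑ τ : Fin n → ZMod 2,
        (Real.tanh K ^ (hammingNorm τ) * ((-1:ℝ))^((α ⬝ᵥ M.mulVec τ).val)) := by
    intro α
    set v := α ᵥ* M with hv
    have e0 : ∀ b, (((0 : Fin n → ZMod 2) b).val + ((v b).val)) = (v b).val := by
      intro b; simp [ZMod.val_zero]
    simp_rw [e0]
    rw [Finset.mul_sum, Real.exp_sum]
    have : ∀ b, Real.exp (K * (-1:ℝ)^((v b).val)) =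
        Real.cosh K * ∑ t : ZMod 2, Real.tanh K ^ t.val * (-1:ℝ)^((v b).val * t.val) :=
      fun b => exp_expand K (v b)
    simp_rw [this]
    rw [Finset.prod_mul_distrib, Finset.prod_const, Finset.card_univ, Fintype.card_fin]
    congr 1
    have key := Finset.prod_univ_sum (t := fun _ : Fin n => (Finset.univ : Finset (ZMod 2)))
      (f := fun b t => Real.tanh K ^ t.val * (-1:ℝ)^((v b).val * t.val))
    rw [Fintype.piFinset_univ] at key
    rw [key]
    refine Finset.sum_congr rfl fun τ _ => ?_
    rw [Finset.prod_mul_distrib, Finset.prod_pow_eq_pow_sum, ← hn_eq_sum]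
    congr 1
    have : ((v ⬝ᵥ τ).val) = ((α ⬝ᵥ M.mulVec τ).val) := by
      rw [hv, ← Matrix.dotProduct_mulVec]
    rw [← this, dotProduct, chi_sum]
    exact (Finset.prod_congr rfl fun b _ => by rw [chi_mul]).symm
  simp_rw [step1]
  rw [← Finset.mul_sum, Finset.sum_comm]
  have inner : ∀ τ : Fin n → ZMod 2,
      (∑ α : ρ → ZMod 2, Real.tanh K ^ hammingNorm τ * ((-1:ℝ)) ^ ((α ⬝ᵥ M.mulVec τ).val))
      = (2:ℝ)^(Fintype.card ρ) * (if M.mulVec τ = 0 then Real.tanh K ^ hammingNorm τ else 0) := by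
    intro τ
    rw [← Finset.mul_sum, char_sum]
    by_cases h : M.mulVec τ = 0 <;> simp [h, mul_comm]
  simp_rw [inner]
  rw [← Finset.mul_sum]
  ring


private lemma fiber_card {ρ : Type*} [Fintype ρ] [DecidableEq ρ] {n : ℕ}
    (M : Matrix ρ (Fin n) (ZMod 2)) (b : Fin n → ZMod 2) (α₀ : ρ → ZMod 2) (hb : α₀ ᵥ* M = b) :
    (Finset.univ.filter (fun α : ρ → ZMod 2 => α ᵥ* M = b)).card
      = Nat.card (LinearMap.ker M.vecMulLinear) := by
  classical
  rw [Nat.card_eq_fintype_card, ← Fintype.card_subtype]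
  refine Fintype.card_congr ?_
  refine ⟨fun a => ⟨a.1 - α₀, ?_⟩, fun x => ⟨x.1 + α₀, ?_⟩, ?_, ?_⟩
  · have := a.2
    simp only [LinearMap.mem_ker, map_sub, Matrix.vecMulLinear_apply]
    rw [this, hb, sub_self]
  · have := x.2
    simp only [LinearMap.mem_ker, Matrix.vecMulLinear_apply] at this ⊢
    rw [Matrix.add_vecMul, this, hb, zero_add]
  · intro a; ext : 2; simp
  · intro x; ext : 2; simp

private lemma sum_vecMul {ρ : Type*} [Fintype ρ] [DecidableEq ρ] {n : ℕ}
    (M : Matrix ρ (Fin n) (ZMod 2)) (f : (Fin n → ZMod 2) → ℝ) :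
    ∑ α : ρ → ZMod 2, f (α ᵥ* M)
      = (Nat.card (LinearMap.ker M.vecMulLinear) : ℝ) *
        ∑ c : Fin n → ZMod 2, (if c ∈ LinearMap.range M.vecMulLinear then f c else 0) := by
  classical
  rw [Finset.sum_comp f (fun α : ρ → ZMod 2 => α ᵥ* M)]
  have himg : (Finset.univ : Finset (ρ → ZMod 2)).image (fun α => α ᵥ* M)
      = Finset.univ.filter (fun c => c ∈ LinearMap.range M.vecMulLinear) := by
    ext c
    simp only [Finset.mem_image, Finset.mem_filter, Finset.mem_univ, true_and,
      LinearMap.mem_range, Matrix.vecMulLinear_apply]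
  rw [himg, ← Finset.sum_filter, Finset.mul_sum]
  refine Finset.sum_congr rfl fun c hc => ?_
  rw [Finset.mem_filter] at hc
  obtain ⟨α₀, hα₀⟩ := hc.2
  rw [Matrix.vecMulLinear_apply] at hα₀
  rw [show (Finset.filter (fun α : ρ → ZMod 2 => α ᵥ* M = c) Finset.univ).card
      = Nat.card (LinearMap.ker M.vecMulLinear) from fiber_card M c α₀ hα₀, nsmul_eq_mul]

private lemma card_ker {ρ : Type*} [Fintype ρ] [DecidableEq ρ] {n : ℕ}
    (M : Matrix ρ (Fin n) (ZMod 2)) :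
    (Nat.card (LinearMap.ker M.vecMulLinear) : ℝ)
      = 2 ^ (Module.finrank (ZMod 2) (LinearMap.ker M.vecMulLinear)) := by
  classical
  have : Fintype (LinearMap.ker M.vecMulLinear) := Fintype.ofFinite _
  rw [Nat.card_eq_fintype_card, Module.card_eq_pow_finrank (K := ZMod 2), ZMod.card]
  norm_num

private lemma zf_weight {ρ : Type*} [Fintype ρ] [DecidableEq ρ] {n : ℕ}
    (M : Matrix ρ (Fin n) (ZMod 2)) (K : ℝ) :
    Zf M 0 K = ∑ α : ρ → ZMod 2, Real.exp (K * ((n:ℝ) - 2 * hammingNorm (α ᵥ* M))) := by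
  unfold Zf
  refine Finset.sum_congr rfl fun α _ => ?_
  congr 1
  congr 1
  have term : ∀ b, ((-1:ℝ)) ^ (((0 : Fin n → ZMod 2) b).val + (((α ᵥ* M)) b).val)
      = 1 - 2 * (((α ᵥ* M) b).val : ℝ) := by
    intro b
    simp only [Pi.zero_apply, ZMod.val_zero, zero_add]
    rcases zmod2_cases ((α ᵥ* M) b) with h|h <;>
      rw [h] <;>
      norm_num [show ((0:ZMod 2)).val = 0 by decide, show ((1:ZMod 2)).val = 1 by decide]
  simp_rw [term]
  rw [Finset.sum_sub_distrib, Finset.sum_const, Finset.card_univ, Fintype.card_fin,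
    ← Finset.mul_sum, hn_eq_sum]
  push_cast
  ring

private lemma zf_primal {ρ : Type*} [Fintype ρ] [DecidableEq ρ] {n : ℕ}
    (M : Matrix ρ (Fin n) (ZMod 2)) (K Kd : ℝ) (h : Real.tanh Kd = Real.exp (-(2*K))) :
    Zf M 0 K = (Nat.card (LinearMap.ker M.vecMulLinear) : ℝ) * Real.exp (K * n) *
      ∑ c : Fin n → ZMod 2,
        (if c ∈ LinearMap.range M.vecMulLinear then Real.tanh Kd ^ hammingNorm c else 0) := by
  rw [zf_weight, sum_vecMul M (fun c => Real.exp (K * ((n:ℝ) - 2 * hammingNorm c)))]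
  rw [mul_assoc]
  congr 1
  rw [Finset.mul_sum]
  refine Finset.sum_congr rfl fun c _ => ?_
  by_cases hc : c ∈ LinearMap.range M.vecMulLinear
  · rw [if_pos hc, if_pos hc, h, ← Real.exp_nat_mul, ← Real.exp_add]
    congr 1
    ring
  · rw [if_neg hc, if_neg hc, mul_zero]


private lemma tanh_exp (x : ℝ) :
    Real.tanh x = (Real.exp x - (Real.exp x)⁻¹) / (Real.exp x + (Real.exp x)⁻¹) := by
  have h : (0:ℝ) < Real.exp x := Real.exp_pos x
  rw [Real.tanh_eq_sinh_div_cosh, Real.sinh_eq, Real.cosh_eq, Real.exp_neg]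
  field_simp

private lemma expsq (x : ℝ) : Real.exp (-(2*x)) = ((Real.exp x)^2)⁻¹ := by
  rw [Real.exp_neg]
  congr 1
  rw [two_mul, Real.exp_add, sq]

private lemma key_eq {K Ks : ℝ} (hdual : Real.tanh Ks = Real.exp (-(2 * K))) :
    (Real.exp K)^2 * (Real.exp Ks)^2 = (Real.exp K)^2 + (Real.exp Ks)^2 + 1 := by
  have ha : (0:ℝ) < Real.exp K := Real.exp_pos K
  have hb : (0:ℝ) < Real.exp Ks := Real.exp_pos Ks
  rw [tanh_exp, expsq] at hdual
  have hden : Real.exp Ks + (Real.exp Ks)⁻¹ ≠ 0 := by positivity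
  field_simp at hdual
  nlinarith [hdual]

private lemma tanh_symm {K Ks : ℝ} (hdual : Real.tanh Ks = Real.exp (-(2 * K))) :
    Real.tanh K = Real.exp (-(2 * Ks)) := by
  have key := key_eq hdual
  have ha : (0:ℝ) < Real.exp K := Real.exp_pos K
  have hb : (0:ℝ) < Real.exp Ks := Real.exp_pos Ks
  rw [tanh_exp, expsq]
  have hden : Real.exp K + (Real.exp K)⁻¹ ≠ 0 := by positivity
  field_simp
  nlinarith [key]

private lemma cosh_identity {K Ks : ℝ} (hdual : Real.tanh Ks = Real.exp (-(2 * K))) :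
    Real.log (Real.cosh K) + Real.log (Real.cosh Ks) = K + Ks - Real.log 2 := by
  have key := key_eq hdual
  have ha : (0:ℝ) < Real.exp K := Real.exp_pos K
  have hb : (0:ℝ) < Real.exp Ks := Real.exp_pos Ks
  have hmul : Real.cosh K * Real.cosh Ks = Real.exp (K + Ks) / 2 := by
    rw [Real.cosh_eq, Real.cosh_eq, Real.exp_neg, Real.exp_neg, Real.exp_add]
    field_simp
    nlinarith [key]
  have h1 : Real.log (Real.cosh K * Real.cosh Ks) = Real.log (Real.exp (K+Ks) / 2) := by
    rw [hmul]
  rw [Real.log_mul (ne_of_gt (Real.cosh_pos K)) (ne_of_gt (Real.cosh_pos Ks)),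
    Real.log_div (Real.exp_ne_zero _) (by norm_num), Real.log_exp] at h1
  linarith

private lemma rank_vecMul {ρ : Type*} [Fintype ρ] [DecidableEq ρ] {n : ℕ}
    (M : Matrix ρ (Fin n) (ZMod 2)) :
    Module.finrank (ZMod 2) (LinearMap.range M.vecMulLinear) = M.rank := by
  have h : Mᵀ.rank = M.rank := Matrix.rank_transpose M
  rw [Matrix.rank, Matrix.mulVecLin_transpose] at h
  exact h

private lemma pair_log {ρ ρ' : Type*} [Fintype ρ] [DecidableEq ρ] [Fintype ρ'] [DecidableEq ρ']
    {n : ℕ} (A : Matrix ρ (Fin n) (ZMod 2)) (B : Matrix ρ' (Fin n) (ZMod 2))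
    (hker : LinearMap.ker B.mulVecLin = LinearMap.range A.vecMulLinear)
    (K Ks : ℝ) (h : Real.tanh K = Real.exp (-(2*Ks))) :
    Real.log (Zf B 0 K) - Real.log (Zf A 0 Ks)
      = (Fintype.card ρ') * Real.log 2 + n * Real.log (Real.cosh K)
        - (Module.finrank (ZMod 2) (LinearMap.ker A.vecMulLinear)) * Real.log 2 - Ks * n := by
  have htpos : 0 < Real.tanh K := h ▸ Real.exp_pos _
  set T : ℝ := ∑ τ : Fin n → ZMod 2,
    (if B.mulVec τ = 0 then Real.tanh K ^ (hammingNorm τ) else 0) with hT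
  have hTpos : 0 < T := by
    rw [hT]
    refine Finset.sum_pos' (fun τ _ => ?_) ⟨0, Finset.mem_univ _, ?_⟩
    · by_cases hτ : B.mulVec τ = 0 <;> simp [hτ, le_of_lt (pow_pos htpos _)]
    · rw [if_pos (by simp), hammingNorm_zero, pow_zero]; norm_num
  have hB : Zf B 0 K = (2:ℝ)^(Fintype.card ρ') * Real.cosh K ^ n * T := kw B K
  have hA : Zf A 0 Ks
      = (2:ℝ)^(Module.finrank (ZMod 2) (LinearMap.ker A.vecMulLinear))
        * Real.exp (Ks * n) * T := by
    rw [zf_primal A Ks K h, card_ker]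
    congr 1
    rw [hT]
    refine Finset.sum_congr rfl fun c _ => ?_
    have hiff : (c ∈ LinearMap.range A.vecMulLinear) ↔ B.mulVec c = 0 := by
      rw [← hker, LinearMap.mem_ker, Matrix.mulVecLin_apply]
    by_cases hc : B.mulVec c = 0
    · rw [if_pos (hiff.mpr hc), if_pos hc]
    · rw [if_neg (fun hh => hc (hiff.mp hh)), if_neg hc]
  rw [hB, hA]
  rw [Real.log_mul (by positivity) (ne_of_gt hTpos),
    Real.log_mul (by positivity) (by positivity),
    Real.log_mul (by positivity) (ne_of_gt hTpos),
    Real.log_mul (by positivity) (Real.exp_ne_zero _),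
    Real.log_pow, Real.log_pow, Real.log_pow, Real.log_exp]
  push_cast
  ring


/-- The two rank-nullity style facts packaged: for an adapted dual pair. -/
private lemma dual_facts {rA rB k n : ℕ} (A : Matrix (Fin rA) (Fin n) (ZMod 2))
    (B : Matrix (Fin rB) (Fin n) (ZMod 2))
    (Bs : Matrix (Fin rA ⊕ Fin k) (Fin n) (ZMod 2))
    (hBs : IsAdaptedDual A B Bs) :
    LinearMap.ker Bs.mulVecLin = LinearMap.range B.vecMulLinear
      ∧ Bs.rank + B.rank = n ∧ A.rank ≤ Bs.rank := by
  classical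
  have hfr : ∀ m : ℕ, Module.finrank (ZMod 2) (Fin m → ZMod 2) = m := by
    intro m; rw [Module.finrank_pi, Fintype.card_fin]
  -- rows of Bs are in ker B.mulVecLin
  have hrow : ∀ i, B.mulVec (Bs i) = 0 := by
    intro i
    have : Bs i ∈ LinearMap.range Bs.vecMulLinear :=
      ⟨Pi.single i 1, by rw [Matrix.vecMulLinear_apply, Matrix.single_one_vecMul]; rfl⟩
    rw [hBs.2, LinearMap.mem_ker, Matrix.mulVecLin_apply] at this
    exact this
  have hBsBT : Bs * Bᵀ = 0 := by
    ext i j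
    have h0 := congr_fun (hrow i) j
    simp only [Matrix.mulVec, dotProduct, Pi.zero_apply] at h0
    simp only [Matrix.mul_apply, Matrix.transpose_apply, Matrix.zero_apply]
    rw [← h0]
    exact Finset.sum_congr rfl fun b _ => mul_comm _ _
  -- rank bookkeeping
  have h1 : Module.finrank (ZMod 2) (LinearMap.ker B.mulVecLin) = Bs.rank := by
    rw [← hBs.2, rank_vecMul]
  have h2 : B.rank + Bs.rank = n := by
    have := LinearMap.finrank_range_add_finrank_ker B.mulVecLin
    rw [hfr, h1] at this
    exact this
  have h3 : Bs.rank + Module.finrank (ZMod 2) (LinearMap.ker Bs.mulVecLin) = n := by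
    have := LinearMap.finrank_range_add_finrank_ker Bs.mulVecLin
    rw [hfr] at this
    exact this
  have hle : LinearMap.range B.vecMulLinear ≤ LinearMap.ker Bs.mulVecLin := by
    rintro c ⟨β, rfl⟩
    rw [LinearMap.mem_ker, Matrix.vecMulLinear_apply, Matrix.mulVecLin_apply,
      ← Matrix.mulVec_transpose, Matrix.mulVec_mulVec, hBsBT, Matrix.zero_mulVec]
  have hker : LinearMap.ker Bs.mulVecLin = LinearMap.range B.vecMulLinear := by
    refine (Submodule.eq_of_le_of_finrank_le hle ?_).symm
    rw [rank_vecMul]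
    omega
  have hle2 : A.rank ≤ Bs.rank := by
    rw [← rank_vecMul, ← rank_vecMul]
    refine Submodule.finrank_mono ?_
    rintro c ⟨α, rfl⟩
    refine ⟨Sum.elim α 0, ?_⟩
    rw [Matrix.vecMulLinear_apply, Matrix.vecMulLinear_apply]
    ext b
    simp only [Matrix.vecMul, dotProduct, Fintype.sum_sum_type, Sum.elim_inl,
      Sum.elim_inr, Pi.zero_apply, zero_mul, Finset.sum_const_zero, add_zero, hBs.1]
  exact ⟨hker, by omega, hle2⟩

end KWAux


/-- Kramers–Wannier duality of the homological difference:
`ΔF_0(G,H;K) = k ln 2 − ΔF_0(H,G;K*)` where `tanh K* = e^{−2K}`. -/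
theorem stmt4 {rG rH k n : ℕ} (G : Matrix (Fin rG) (Fin n) (ZMod 2))
    (H : Matrix (Fin rH) (Fin n) (ZMod 2)) (hGH : G * Hᵀ = 0)
    (hk : k = n - G.rank - H.rank)
    (Hs : Matrix (Fin rG ⊕ Fin k) (Fin n) (ZMod 2))
    (hHs : IsAdaptedDual G H Hs)
    (Gs : Matrix (Fin rH ⊕ Fin k) (Fin n) (ZMod 2))
    (hGs : IsAdaptedDual H G Gs)
    (K Ks : ℝ) (hK : 0 < K) (hKs : 0 < Ks)
    (hdual : Real.tanh Ks = Real.exp (-(2 * K))) :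
    deltaF G Hs 0 K = k * Real.log 2 - deltaF H Gs 0 Ks := by
  classical
  obtain ⟨hkerHs, hHrk, hGle⟩ := KWAux.dual_facts G H Hs hHs
  obtain ⟨hkerGs, hGrk, hHle⟩ := KWAux.dual_facts H G Gs hGs
  have hfr : ∀ m : ℕ, Module.finrank (ZMod 2) (Fin m → ZMod 2) = m := by
    intro m; rw [Module.finrank_pi, Fintype.card_fin]
  set fH := Module.finrank (ZMod 2) (LinearMap.ker H.vecMulLinear) with hfH
  set fG := Module.finrank (ZMod 2) (LinearMap.ker G.vecMulLinear) with hfG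
  have hfHr : H.rank + fH = rH := by
    have := LinearMap.finrank_range_add_finrank_ker H.vecMulLinear
    rw [hfr, KWAux.rank_vecMul] at this
    exact this
  have hfGr : G.rank + fG = rG := by
    have := LinearMap.finrank_range_add_finrank_ker G.vecMulLinear
    rw [hfr, KWAux.rank_vecMul] at this
    exact this
  have hkn : k + G.rank + H.rank = n := by omega
  have P1 := KWAux.pair_log H Hs hkerHs K Ks (KWAux.tanh_symm hdual)
  have P2 := KWAux.pair_log G Gs hkerGs Ks K hdual
  have c1 := KWAux.cosh_identity hdual
  simp only [Fintype.card_sum, Fintype.card_fin, ← hfH, ← hfG] at P1 P2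
  have castEq : (rG:ℝ) + rH + 2*k - fG - fH - n = k := by
    have : rG + rH + 2*k = fG + fH + n + k := by omega
    have := congrArg (fun m : ℕ => (m:ℝ)) this
    push_cast at this
    linarith
  simp only [deltaF]
  push_cast at P1 P2 ⊢
  linear_combination P1 + P2 + (n:ℝ) * c1 + Real.log 2 * castEq
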